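/- In a Chinese auction with continuous given budgets in which the valuations are symmetric (v_{i,j} = v_j for all players i) and strictly positive and all budgets are equal (w_i = w for all i), there exists a symmetric pure Nash equilibrium; specifically, the profile in which every player allocates x_{i,j} = (v_j/(v_1 + … + v_m))·w on each item j is a pure Nash equilibrium in which all players play the same strategy. -/

import Mathlib

/-- Utility of player `i` in a Chinese auction with given budgets and symmetric
valuations `v : Fin m → ℝ`. -/
noncomputable def utilSym {n m : ℕ} (v : Fin m → ℝ) (x : Fin n → Fin m → ℝ)
    (i : Fin n) : ℝ :=
  ∑ j, (if 0 < ∑ k, x k j then x i j / (∑ k, x k j) else 0) * v j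

lemma tangent (v c a y : ℝ) (hv : 0 < v) (hc : 0 < c) (ha : 0 ≤ a) (hy : 0 ≤ y) :
    (if 0 < y + a * v then y / (y + a * v) else 0) * v ≤
      c * v / (c + a) + a / (c + a) ^ 2 * (y - c * v) := by
  have hca : 0 < c + a := by linarith
  by_cases h : 0 < y + a * v
  · rw [if_pos h]
    have heq : c * v / (c + a) + a / (c + a) ^ 2 * (y - c * v)
        = (c * v * (c + a) + a * (y - c * v)) / (c + a) ^ 2 := by
      field_simp
    rw [heq, div_mul_eq_mul_div, div_le_div_iff₀ h (by positivity)]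
    nlinarith [mul_nonneg ha (sq_nonneg (y - c * v))]
  · rw [if_neg h]
    push_neg at h
    have hav : 0 ≤ a * v := mul_nonneg ha hv.le
    have hy0 : y = 0 := le_antisymm (by linarith) hy
    have ha0 : a = 0 := by
      have : a * v = 0 := le_antisymm (by linarith) hav
      exact (mul_eq_zero.mp this).resolve_right hv.ne'
    rw [hy0, ha0]
    simp
    positivity

/-- With symmetric, strictly positive valuations and symmetric continuous
budgets (`w i = w` for all `i`), the profile where every player places
`(v j / ∑ v) * w` on item `j` is a pure Nash equilibrium in which all players play
the same strategy (a symmetric pure Nash equilibrium). -/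
theorem stmt2 {n m : ℕ} (v : Fin m → ℝ) (hv : ∀ j, 0 < v j)
    (w : ℝ) (hw : 0 < w)
    (x : Fin n → Fin m → ℝ) (hx : ∀ i j, x i j = (v j / ∑ k, v k) * w) :
    (∀ i i' : Fin n, x i = x i') ∧
    (∀ i : Fin n, ∀ y : Fin m → ℝ, (∀ j, 0 ≤ y j) → (∑ j, y j = w) →
      utilSym v (Function.update x i y) i ≤ utilSym v x i) := by
  constructor
  · intro i i'; funext j; rw [hx, hx]
  intro i y hy hsum
  rcases Nat.eq_zero_or_pos m with hm | hm
  · subst hm; simp [utilSym]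
  have hS : 0 < ∑ k, v k := Finset.sum_pos (fun j _ => hv j)
    (Finset.univ_nonempty_iff.mpr ⟨⟨0, hm⟩⟩)
  have hnpos : 0 < n := i.pos
  have hn1 : (1:ℝ) ≤ (n:ℝ) := by exact_mod_cast hnpos
  have hn0 : (0:ℝ) < (n:ℝ) := by linarith
  set S : ℝ := ∑ k, v k with hS_def
  set c : ℝ := w / S with hc_def
  set a : ℝ := ((n:ℝ) - 1) * w / S with ha_def
  have hc : 0 < c := div_pos hw hS
  have ha : 0 ≤ a := div_nonneg (mul_nonneg (by linarith) hw.le) hS.le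
  have hca : c + a = (n:ℝ) * w / S := by
    rw [hc_def, ha_def, ← add_div]; ring_nf
  have hsumx : ∀ j, ∑ k, x k j = (n:ℝ) * (v j / S * w) := by
    intro j
    simp only [hx]
    rw [Finset.sum_const, Finset.card_univ, Fintype.card_fin, nsmul_eq_mul]
  have hxpos : ∀ j, 0 < ∑ k, x k j := by
    intro j
    rw [hsumx]
    exact mul_pos hn0 (mul_pos (div_pos (hv j) hS) hw)
  -- equilibrium utility
  have hux : utilSym v x i = S / n := by
    unfold utilSym
    have : ∀ j ∈ Finset.univ, (if 0 < ∑ k, x k j then x i j / (∑ k, x k j) else 0) * v j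
        = v j / n := by
      intro j _
      rw [if_pos (hxpos j), hx i j, hsumx j]
      have h1 : v j / S * w ≠ 0 := (mul_pos (div_pos (hv j) hS) hw).ne'
      rw [mul_comm ((n:ℝ)), div_mul_eq_div_div, div_self h1]
      ring
    rw [Finset.sum_congr rfl this, ← Finset.sum_div]
  -- deviation denominator
  have hupd : ∀ j, ∑ k, Function.update x i y k j = y j + a * v j := by
    intro j
    have h1 : ∀ k ∈ Finset.univ, Function.update x i y k j
        = x k j + (if k = i then y j - x i j else 0) := by
      intro k _
      rcases eq_or_ne k i with rfl | hk
      · simp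
      · simp [Function.update_of_ne hk, hk]
    rw [Finset.sum_congr rfl h1, Finset.sum_add_distrib, Finset.sum_ite_eq' Finset.univ i,
      if_pos (Finset.mem_univ i), hsumx j, hx i j]
    rw [ha_def]; ring
  -- bound each deviation term by the tangent line
  have hud : utilSym v (Function.update x i y) i
      ≤ ∑ j, (c * v j / (c + a) + a / (c + a) ^ 2 * (y j - c * v j)) := by
    unfold utilSym
    apply Finset.sum_le_sum
    intro j _
    rw [hupd j, Function.update_self]
    exact tangent (v j) c a (y j) (hv j) hc ha (hy j)
  have hcS : c * S = w := by rw [hc_def]; field_simp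
  have hRHS : ∑ j, (c * v j / (c + a) + a / (c + a) ^ 2 * (y j - c * v j)) = S / n := by
    rw [Finset.sum_add_distrib, ← Finset.sum_div, ← Finset.mul_sum, ← Finset.mul_sum,
      Finset.sum_sub_distrib, ← Finset.mul_sum, ← hS_def, hsum, hcS, sub_self, mul_zero,
      add_zero, hca]
    rw [div_div_eq_mul_div]
    rw [div_eq_div_iff (by positivity) hn0.ne']
    ring
  rw [hux]
  rw [hRHS] at hud
  exact hud
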